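/- Let q be a prime power and w ∈ F_q with w ≠ 0. Set h = (X³ − 3w²X + w³)/(X(X − w)) ∈ F_q(X). Then the extension F_q(X)/F_q(h) is Galois of degree 3; its Galois group is the cyclic group of order 3 generated by the F_q-algebra automorphism of F_q(X) sending X to w²/(w − X). -/

import Mathlib

open Polynomial

-- test auxiliary lemmas
lemma aux_ext {F : Type*} [Field F] (e f : RatFunc F ≃ₐ[F] RatFunc F)
    (hef : e RatFunc.X = f RatFunc.X) : e = f := by
  have key : (e : RatFunc F →+* RatFunc F) = (f : RatFunc F →+* RatFunc F) := by
    apply IsLocalization.ringHom_ext (nonZeroDivisors F[X])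
    apply Polynomial.ringHom_ext'
    · ext a
      simp [RatFunc.algebraMap_C, ← RatFunc.algebraMap_eq_C]
    · simpa [RatFunc.algebraMap_X] using hef
  exact AlgEquiv.ext fun x => DFunLike.congr_fun key x

lemma aux_top {F : Type*} [Field F] (A : IntermediateField F (RatFunc F)) :
    IntermediateField.adjoin A ({RatFunc.X} : Set (RatFunc F)) = ⊤ := by
  rw [eq_top_iff]
  rintro fx -
  have hX : RatFunc.X ∈ IntermediateField.adjoin A ({RatFunc.X} : Set (RatFunc F)) :=
    IntermediateField.subset_adjoin _ _ rfl
  have key : ∀ p : F[X], algebraMap F[X] (RatFunc F) p ∈ IntermediateField.adjoin A ({RatFunc.X} : Set (RatFunc F)) := by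
    intro p
    induction p using Polynomial.induction_on with
    | C a =>
      rw [RatFunc.algebraMap_C, ← RatFunc.algebraMap_eq_C,
        IsScalarTower.algebraMap_apply F A (RatFunc F)]
      exact IntermediateField.algebraMap_mem _ _
    | add p q hp hq => rw [map_add]; exact add_mem hp hq
    | monomial n a _ =>
      rw [map_mul, map_pow, RatFunc.algebraMap_X, RatFunc.algebraMap_C,
        ← RatFunc.algebraMap_eq_C, IsScalarTower.algebraMap_apply F A (RatFunc F)]
      exact mul_mem (IntermediateField.algebraMap_mem _ _) (pow_mem hX _)
  rw [← RatFunc.num_div_denom fx]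
  exact div_mem (key _) (key _)

set_option maxHeartbeats 1000000 in
set_option synthInstance.maxHeartbeats 400000 in
theorem stmt12 {F : Type*} [Field F] [Fintype F] (w : F) (hw : w ≠ 0)
    (σ : RatFunc F ≃ₐ[F] RatFunc F)
    (hσ : σ RatFunc.X =
      algebraMap F (RatFunc F) (w ^ 2) / (algebraMap F (RatFunc F) w - RatFunc.X))
    (h : RatFunc F)
    (hh : h = (RatFunc.X ^ 3 - algebraMap F (RatFunc F) (3 * w ^ 2) * RatFunc.X
          + algebraMap F (RatFunc F) (w ^ 3)) /
        (RatFunc.X * (RatFunc.X - algebraMap F (RatFunc F) w))) :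
    IsGalois (IntermediateField.adjoin F {h}) (RatFunc F) ∧
    Module.finrank (IntermediateField.adjoin F {h}) (RatFunc F) = 3 ∧
    orderOf σ = 3 ∧
    IntermediateField.fixedField (Subgroup.zpowers σ) = IntermediateField.adjoin F {h} := by
  haveI : Fact (Nat.Prime 3) := ⟨by norm_num⟩
  have hCw : algebraMap F (RatFunc F) w ≠ 0 := by
    simpa using (algebraMap F (RatFunc F)).injective.ne hw
  have hXne : (RatFunc.X : RatFunc F) ≠ 0 := RatFunc.X_ne_zero
  have hXw : RatFunc.X - algebraMap F (RatFunc F) w ≠ 0 := by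
    have heq : RatFunc.X - algebraMap F (RatFunc F) w
        = algebraMap F[X] (RatFunc F) (X - Polynomial.C w) := by
      rw [map_sub, RatFunc.algebraMap_X, RatFunc.algebraMap_C, RatFunc.algebraMap_eq_C]
    rw [heq]
    exact RatFunc.algebraMap_ne_zero (X_sub_C_ne_zero w)
  have hwX : algebraMap F (RatFunc F) w - RatFunc.X ≠ 0 := by
    rw [← neg_sub]; exact neg_ne_zero.mpr hXw
  rw [RatFunc.algebraMap_eq_C] at hσ hh hCw hXw hwX
  have hC3 : RatFunc.C (3 * w ^ 2) = 3 * RatFunc.C w ^ 2 := by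
    rw [map_mul, map_pow, map_ofNat]
  have hCw2 : RatFunc.C (w ^ 2) = RatFunc.C w ^ 2 := map_pow _ _ _
  have hCw3 : RatFunc.C (w ^ 3) = RatFunc.C w ^ 3 := map_pow _ _ _
  rw [hCw2] at hσ
  rw [hC3, hCw3] at hh
  have e1 : RatFunc.C w ^ 2 / (RatFunc.C w - RatFunc.X) - RatFunc.C w
      = RatFunc.C w * RatFunc.X / (RatFunc.C w - RatFunc.X) := by
    rw [eq_div_iff hwX, sub_mul, div_mul_cancel₀ _ hwX]; ring
  have e2 : RatFunc.C w - RatFunc.C w ^ 2 / (RatFunc.C w - RatFunc.X)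
      = -(RatFunc.C w * RatFunc.X) / (RatFunc.C w - RatFunc.X) := by
    rw [eq_div_iff hwX, sub_mul, div_mul_cancel₀ _ hwX]; ring
  have hσC : ∀ r : F, σ (RatFunc.C r) = RatFunc.C r := fun r => by
    rw [← RatFunc.algebraMap_eq_C]; exact σ.commutes r
  -- iterates of σ on X
  have hσ2 : σ (σ RatFunc.X) = RatFunc.C w
      * (RatFunc.X - RatFunc.C w) / RatFunc.X := by
    rw [hσ]
    simp only [map_div₀, map_sub, map_pow, map_mul, hσC, hσ, e2]
    field_simp
    ring
  have hσ3 : σ (σ (σ RatFunc.X)) = RatFunc.X := by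
    rw [hσ2]
    simp only [map_div₀, map_sub, map_pow, map_mul, hσC, hσ, e1]
    field_simp
  have hord : orderOf σ = 3 := by
    have h3 : σ ^ 3 = 1 := by
      apply aux_ext
      have hp : (σ ^ 3) RatFunc.X = σ (σ (σ RatFunc.X)) := by
        rw [pow_succ, pow_succ, pow_one]; rfl
      rw [hp, hσ3]; rfl
    have hne : σ ≠ 1 := by
      intro h1
      have hfix : σ RatFunc.X = RatFunc.X := by rw [h1]; rfl
      rw [hσ, div_eq_iff hwX] at hfix
      have hpoly : algebraMap F[X] (RatFunc F) (Polynomial.C (w ^ 2))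
          = algebraMap F[X] (RatFunc F) (X * (Polynomial.C w - X)) := by
        rw [map_mul, map_sub, RatFunc.algebraMap_X, RatFunc.algebraMap_C,
          RatFunc.algebraMap_C]
        simpa using hfix
      have := RatFunc.algebraMap_injective F hpoly
      have h0 := congrArg (Polynomial.eval 0) this
      simp at h0
      exact hw h0
    exact orderOf_eq_prime h3 hne
  -- h is fixed by σ
  have hfixh : σ h = h := by
    conv_lhs => rw [hh]
    rw [hh]
    simp only [map_div₀, map_add, map_sub, map_pow, map_mul, map_ofNat, hσC, hσ, e1]
    field_simp
    ring
  set A := IntermediateField.adjoin F {h} with hA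
  set Kf := IntermediateField.fixedField (Subgroup.zpowers σ) with hKfdef
  have hle : A ≤ Kf := by
    rw [hA, IntermediateField.adjoin_le_iff]
    intro x hx
    rw [Set.mem_singleton_iff] at hx
    subst hx
    have hstab : Subgroup.zpowers σ ≤ MulAction.stabilizer (RatFunc F ≃ₐ[F] RatFunc F) x :=
      Subgroup.zpowers_le.mpr hfixh
    intro g
    exact hstab g.2
  -- finrank over the fixed field
  have hfinzp : Finite (Subgroup.zpowers σ) := by
    have : Nat.card (Subgroup.zpowers σ) ≠ 0 := by
      rw [Nat.card_zpowers, hord]; norm_num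
    exact (Nat.card_ne_zero.mp this).2
  haveI := hfinzp
  haveI := Fintype.ofFinite (Subgroup.zpowers σ)
  have hcard : Fintype.card (Subgroup.zpowers σ) = 3 := by
    rw [← Nat.card_eq_fintype_card, Nat.card_zpowers, hord]
  have hfin3 : Module.finrank Kf (RatFunc F) = 3 := by
    have hfr : Module.finrank Kf (RatFunc F) = Fintype.card (Subgroup.zpowers σ) :=
      FixedPoints.finrank_eq_card (Subgroup.zpowers σ) (RatFunc F)
    rw [hfr, hcard]
  haveI hFDKf : FiniteDimensional Kf (RatFunc F) :=
    inferInstanceAs (FiniteDimensional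
      (FixedPoints.subfield (Subgroup.zpowers σ) (RatFunc F)) (RatFunc F))
  haveI hGalKf : IsGalois Kf (RatFunc F) :=
    inferInstanceAs (IsGalois
      (FixedPoints.subfield (Subgroup.zpowers σ) (RatFunc F)) (RatFunc F))
  -- X is a root of a monic cubic over A
  have hmemh : h ∈ A := IntermediateField.subset_adjoin F {h} rfl
  let a₂ : A := ⟨-h, neg_mem hmemh⟩
  let a₁ : A := ⟨algebraMap F (RatFunc F) w * h - algebraMap F (RatFunc F) (3 * w ^ 2),
    sub_mem (mul_mem (IntermediateField.algebraMap_mem A w) hmemh)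
      (IntermediateField.algebraMap_mem A _)⟩
  let a₀ : A := ⟨algebraMap F (RatFunc F) (w ^ 3), IntermediateField.algebraMap_mem A _⟩
  set P : Polynomial A := X ^ 3 + (C a₂ * X ^ 2 + C a₁ * X + C a₀) with hPdef
  have hPm : P.Monic := monic_X_pow_add (lt_of_le_of_lt degree_quadratic_le (by norm_num))
  have hPne : P ≠ 0 := hPm.ne_zero
  have hPdeg : P.natDegree = 3 := by
    have hdlt : (C a₂ * X ^ 2 + C a₁ * X + C a₀ : Polynomial A).degree
        < (X ^ 3 : Polynomial A).degree := by
      rw [degree_X_pow]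
      exact lt_of_le_of_lt degree_quadratic_le (by norm_num)
    have hdeg : P.degree = 3 := by
      rw [hPdef, degree_add_eq_left_of_degree_lt hdlt, degree_X_pow]
      rfl
    exact natDegree_eq_of_degree_eq_some hdeg
  have hroot : Polynomial.aeval (RatFunc.X : RatFunc F) P = 0 := by
    have ha₂ : algebraMap A (RatFunc F) a₂ = -h := rfl
    have ha₁ : algebraMap A (RatFunc F) a₁
        = algebraMap F (RatFunc F) w * h - algebraMap F (RatFunc F) (3 * w ^ 2) := rfl
    have ha₀ : algebraMap A (RatFunc F) a₀ = algebraMap F (RatFunc F) (w ^ 3) := rfl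
    rw [RatFunc.algebraMap_eq_C, hC3] at ha₁
    rw [RatFunc.algebraMap_eq_C, hCw3] at ha₀
    have hev : Polynomial.aeval RatFunc.X P
        = RatFunc.X ^ 3 + (-h) * RatFunc.X ^ 2
          + (RatFunc.C w * h - 3 * RatFunc.C w ^ 2) * RatFunc.X
          + RatFunc.C w ^ 3 := by
      simp only [hPdef, map_add, map_mul, map_pow, Polynomial.aeval_X, Polynomial.aeval_C,
        ha₂, ha₁, ha₀]
      ring
    rw [hev, hh]
    field_simp
    ring
  have hXint : IsIntegral A RatFunc.X := ⟨P, hPm, hroot⟩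
  haveI hFDadj : FiniteDimensional A
      (IntermediateField.adjoin A ({RatFunc.X} : Set (RatFunc F))) :=
    IntermediateField.adjoin.finiteDimensional hXint
  have htop := aux_top A
  haveI hFDA : FiniteDimensional A (RatFunc F) := by
    rw [htop] at hFDadj
    exact (IntermediateField.topEquiv (F := A) (E := RatFunc F)).toLinearEquiv.finiteDimensional
  have hrank_le : Module.finrank A (RatFunc F) ≤ 3 := by
    have h1 : Module.finrank A
        (IntermediateField.adjoin A ({RatFunc.X} : Set (RatFunc F)))
        = (minpoly A RatFunc.X).natDegree := IntermediateField.adjoin.finrank hXint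
    rw [htop, IntermediateField.finrank_top'] at h1
    rw [h1]
    calc (minpoly A RatFunc.X).natDegree ≤ P.natDegree :=
        natDegree_le_of_dvd (minpoly.dvd A RatFunc.X (by simpa using hroot)) hPne
      _ = 3 := hPdeg
  have hAeq : A = Kf := IntermediateField.eq_of_le_of_finrank_le' hle
    (by rw [hfin3]; exact hrank_le)
  refine ⟨?_, ?_, hord, hAeq.symm⟩
  · rw [hAeq]; exact hGalKf
  · rw [hAeq]; exact hfin3
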